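/- arXiv:2502.13711 — 3 statements merged into one kernel-verified Lean document; each statement's English description precedes it below -/
import Mathlib

section
/- Let ν > 0, h > 0, δ ≥ 0. Suppose Y is a random variable with the noncentral chi-square distribution with ν degrees of freedom and noncentrality δ, and conditionally on Y = y, X has the noncentral chi-square distribution with ν degrees of freedom and noncentrality y·h. Then X/(1+h) has the noncentral chi-square distribution with ν degrees of freedom and noncentrality hδ/(1+h). -/
open MeasureTheory ProbabilityTheory

/-- A measure on `ℝ` is the noncentral chi-square distribution with `ν` degrees of freedom
and noncentrality `δ` if it is a probability measure whose moment generating function is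
`(1 - 2t)^{-ν/2} exp(δ t / (1 - 2t))` for `t < 1/2`. -/
def IsNoncentralChiSq (μ : Measure ℝ) (ν δ : ℝ) : Prop :=
  IsProbabilityMeasure μ ∧ ∀ t : ℝ, t < 1 / 2 →
    ∫ x, Real.exp (t * x) ∂μ
      = (1 - 2 * t) ^ (-ν / 2) * Real.exp (δ * t / (1 - 2 * t))

/-- Helper: converting a Bochner integral identity for a nonnegative function with positive
value into a lower Lebesgue integral identity. -/
lemma helper_lintegral {μ : Measure ℝ} {f : ℝ → ℝ} (hf : Measurable f) (hf0 : ∀ x, 0 ≤ f x)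
    {V : ℝ} (hV : 0 < V) (hint : ∫ x, f x ∂μ = V) :
    ∫⁻ x, ENNReal.ofReal (f x) ∂μ = ENNReal.ofReal V := by
  have h1 : ∫ x, f x ∂μ = (∫⁻ x, ENNReal.ofReal (f x) ∂μ).toReal :=
    integral_eq_lintegral_of_nonneg_ae (Filter.Eventually.of_forall hf0)
      hf.aestronglyMeasurable
  set L := ∫⁻ x, ENNReal.ofReal (f x) ∂μ with hLdef
  have hL : L ≠ ⊤ := by
    intro hLtop
    rw [hint, hLtop] at h1
    simp at h1
    linarith
  rw [← hint, h1, ENNReal.ofReal_toReal hL]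

/-- A noncentral chi-square measure is supported on the nonnegative reals. -/
lemma noncentralChiSq_ae_nonneg {μ : Measure ℝ} {ν δ : ℝ} (hν : 0 < ν) (hδ : 0 ≤ δ)
    (hμ : IsNoncentralChiSq μ ν δ) : ∀ᵐ y ∂μ, 0 ≤ y := by
  obtain ⟨hprob, hmgf⟩ := hμ
  -- for each ε > 0, μ {y | y ≤ -ε} = 0
  have key : ∀ ε : ℝ, 0 < ε → μ {y | y ≤ -ε} = 0 := by
    intro ε hε
    have hb : ∀ t : ℝ, t < 0 → μ {y | y ≤ -ε} ≤ ENNReal.ofReal (Real.exp (t * ε)) := by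
      intro t ht
      have ht2 : 0 < 1 - 2 * t := by linarith
      have hV : (0:ℝ) < (1 - 2 * t) ^ (-ν / 2) * Real.exp (δ * t / (1 - 2 * t)) := by
        positivity
      have hlint : ∫⁻ y, ENNReal.ofReal (Real.exp (t * y)) ∂μ
          = ENNReal.ofReal ((1 - 2 * t) ^ (-ν / 2) * Real.exp (δ * t / (1 - 2 * t))) :=
        helper_lintegral (by fun_prop) (fun x => (Real.exp_pos _).le) hV
          (hmgf t (by linarith))
      have hmeas : MeasurableSet {y : ℝ | y ≤ -ε} := measurableSet_Iic
      have hlow : ENNReal.ofReal (Real.exp (-(t * ε))) * μ {y | y ≤ -ε}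
          ≤ ∫⁻ y, ENNReal.ofReal (Real.exp (t * y)) ∂μ := by
        calc ENNReal.ofReal (Real.exp (-(t * ε))) * μ {y | y ≤ -ε}
            = ∫⁻ _ in {y | y ≤ -ε}, ENNReal.ofReal (Real.exp (-(t * ε))) ∂μ := by
              rw [setLIntegral_const]
          _ ≤ ∫⁻ y in {y | y ≤ -ε}, ENNReal.ofReal (Real.exp (t * y)) ∂μ := by
              refine setLIntegral_mono (by fun_prop) fun y hy => ?_
              refine ENNReal.ofReal_le_ofReal (Real.exp_le_exp.2 ?_)
              have : y ≤ -ε := hy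
              nlinarith
          _ ≤ ∫⁻ y, ENNReal.ofReal (Real.exp (t * y)) ∂μ :=
              setLIntegral_le_lintegral _ _
      have hVle : (1 - 2 * t) ^ (-ν / 2) * Real.exp (δ * t / (1 - 2 * t)) ≤ 1 := by
        have h1 : (1 - 2 * t) ^ (-ν / 2) ≤ 1 :=
          Real.rpow_le_one_of_one_le_of_nonpos (by linarith) (by linarith)
        have h2 : Real.exp (δ * t / (1 - 2 * t)) ≤ 1 := by
          rw [Real.exp_le_one_iff]
          apply div_nonpos_of_nonpos_of_nonneg
          · exact mul_nonpos_of_nonneg_of_nonpos hδ ht.le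
          · linarith
        nlinarith [Real.rpow_nonneg (by linarith : (0:ℝ) ≤ 1 - 2*t) (-ν/2),
          Real.exp_pos (δ * t / (1 - 2 * t))]
      -- combine
      have hexp : (0:ℝ) < Real.exp (-(t * ε)) := Real.exp_pos _
      have := hlow.trans hlint.le
      calc μ {y | y ≤ -ε}
          ≤ ENNReal.ofReal ((1 - 2 * t) ^ (-ν / 2) * Real.exp (δ * t / (1 - 2 * t)))
            / ENNReal.ofReal (Real.exp (-(t * ε))) := by
            rw [ENNReal.le_div_iff_mul_le (Or.inl (by simp [hexp]))
              (Or.inl ENNReal.ofReal_ne_top), mul_comm]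
            exact this
        _ ≤ ENNReal.ofReal 1 / ENNReal.ofReal (Real.exp (-(t * ε))) := by
            gcongr
        _ = ENNReal.ofReal (Real.exp (t * ε)) := by
            rw [← ENNReal.ofReal_div_of_pos hexp]
            congr 1
            rw [one_div, ← Real.exp_neg, neg_neg]
    -- take t = -(n+1) and let n → ∞
    have htend : Filter.Tendsto (fun n : ℕ => ENNReal.ofReal (Real.exp ((-(n+1) : ℝ) * ε)))
        Filter.atTop (nhds 0) := by
      rw [show (0 : ENNReal) = ENNReal.ofReal 0 by simp]
      apply ENNReal.tendsto_ofReal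
      apply Real.tendsto_exp_atBot.comp
      apply Filter.Tendsto.atBot_mul_const hε
      apply Filter.tendsto_neg_atBot_iff.2
      exact Filter.tendsto_atTop_add_const_right _ _ (tendsto_natCast_atTop_atTop)
    have hle0 : μ {y | y ≤ -ε} ≤ 0 := by
      refine ge_of_tendsto' htend fun n => hb _ ?_
      have : (0:ℝ) < (n:ℝ) + 1 := by positivity
      linarith
    exact le_antisymm hle0 (zero_le)
  rw [MeasureTheory.ae_iff]
  have hset : {y : ℝ | ¬ 0 ≤ y} = ⋃ n : ℕ, {y : ℝ | y ≤ -(1 / (n + 1))} := by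
    ext y
    simp only [Set.mem_setOf_eq, not_le, Set.mem_iUnion]
    constructor
    · intro hy
      obtain ⟨n, hn⟩ := exists_nat_gt (1 / (-y))
      refine ⟨n, ?_⟩
      have hy' : 0 < -y := by linarith
      have h1 : 1 / (-y) < n + 1 := by linarith
      have h2 : 1 / ((n:ℝ) + 1) < -y := by
        rw [div_lt_iff₀ (by positivity)]
        rw [div_lt_iff₀ hy'] at h1
        nlinarith
      linarith
    · intro ⟨n, hn⟩
      have : (0:ℝ) < 1 / ((n:ℝ) + 1) := by positivity
      linarith
  rw [hset]
  refine measure_iUnion_null fun n => key _ (by positivity)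

theorem noncentral_chi_sq_mixture (ν h δ : ℝ) (hν : 0 < ν) (hh : 0 < h) (hδ : 0 ≤ δ)
    (μY : Measure ℝ) (κ : Kernel ℝ ℝ)
    (hY : IsNoncentralChiSq μY ν δ)
    (hκ : ∀ y : ℝ, 0 ≤ y → IsNoncentralChiSq (κ y) ν (y * h)) :
    IsNoncentralChiSq ((μY.bind κ).map (fun x => x / (1 + h))) ν (h * δ / (1 + h)) := by
  obtain ⟨hYprob, hYmgf⟩ := hY
  have hysupp : ∀ᵐ y ∂μY, 0 ≤ y := noncentralChiSq_ae_nonneg hν hδ ⟨hYprob, hYmgf⟩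
  have h1h : (0:ℝ) < 1 + h := by linarith
  have hκm : Measurable (κ : ℝ → Measure ℝ) := κ.measurable
  have hbind_univ : (μY.bind κ) Set.univ = 1 := by
    rw [Measure.bind_apply MeasurableSet.univ hκm.aemeasurable]
    have hcg : ∫⁻ y, (κ y) Set.univ ∂μY = ∫⁻ _, 1 ∂μY := by
      refine lintegral_congr_ae ?_
      filter_upwards [hysupp] with y hy
      have h1 := (hκ y hy).1
      exact h1.measure_univ
    rw [hcg, lintegral_one, measure_univ]
  have hbind_prob : IsProbabilityMeasure (μY.bind κ) := ⟨hbind_univ⟩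
  have hfm : Measurable (fun x : ℝ => x / (1 + h)) := by fun_prop
  constructor
  · exact Measure.isProbabilityMeasure_map hfm.aemeasurable
  intro t ht
  set s := t / (1 + h) with hsdef
  have h2t : (0:ℝ) < 1 - 2 * t := by linarith
  have h2s : (0:ℝ) < 1 - 2 * s := by
    have : 1 - 2 * s = (1 + h - 2 * t) / (1 + h) := by
      rw [eq_div_iff h1h.ne', hsdef, sub_mul, mul_assoc, div_mul_cancel₀ _ h1h.ne']; ring
    rw [this]
    apply div_pos (by linarith) h1h
  set u := h * s / (1 - 2 * s) with hudef
  have hC2 : (1:ℝ) + h - 2 * t ≠ 0 := by linarith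
  have h2u : 1 - 2 * u = (1 - 2 * t) / (1 - 2 * s) := by
    rw [hudef, hsdef]
    field_simp [h1h.ne', hC2]
    ring
  have h2u' : (0:ℝ) < 1 - 2 * u := by rw [h2u]; positivity
  have hu : u < 1 / 2 := by linarith
  -- Step A: rewrite integral over the map
  have stepA : ∫ x, Real.exp (t * x) ∂((μY.bind κ).map (fun x => x / (1 + h)))
      = ∫ x, Real.exp (s * x) ∂(μY.bind κ) := by
    rw [integral_map hfm.aemeasurable
      (Measurable.aestronglyMeasurable (by fun_prop))]
    congr 1
    funext x
    congr 1
    rw [hsdef]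
    ring
  -- Step B: lintegral over the bind
  set C : ℝ := (1 - 2 * s) ^ (-ν / 2) with hCdef
  have hCpos : 0 < C := by rw [hCdef]; positivity
  set D : ℝ := (1 - 2 * u) ^ (-ν / 2) * Real.exp (δ * u / (1 - 2 * u)) with hDdef
  have hDpos : 0 < D := by rw [hDdef]; positivity
  have stepB : ∫⁻ x, ENNReal.ofReal (Real.exp (s * x)) ∂(μY.bind κ)
      = ENNReal.ofReal (C * D) := by
    rw [Measure.lintegral_bind hκm.aemeasurable (by fun_prop)]
    have hinner : ∀ᵐ y ∂μY, ∫⁻ x, ENNReal.ofReal (Real.exp (s * x)) ∂(κ y)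
        = ENNReal.ofReal (C * Real.exp (u * y)) := by
      filter_upwards [hysupp] with y hy
      have hmgfy := (hκ y hy).2 s (by linarith)
      have harg : y * h * s / (1 - 2 * s) = u * y := by rw [hudef]; ring
      rw [harg] at hmgfy
      exact helper_lintegral (by fun_prop) (fun x => (Real.exp_pos _).le)
        (by positivity) hmgfy
    rw [lintegral_congr_ae hinner]
    have : ∀ y : ℝ, ENNReal.ofReal (C * Real.exp (u * y))
        = ENNReal.ofReal C * ENNReal.ofReal (Real.exp (u * y)) := fun y =>
      ENNReal.ofReal_mul hCpos.le
    simp_rw [this]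
    rw [lintegral_const_mul _ (by fun_prop)]
    rw [helper_lintegral (μ := μY) (by fun_prop) (fun x => (Real.exp_pos _).le)
      (by positivity) (hYmgf u hu)]
    rw [← ENNReal.ofReal_mul hCpos.le, ← hDdef]
  -- Step C: convert to Bochner integral
  have stepC : ∫ x, Real.exp (s * x) ∂(μY.bind κ) = C * D := by
    rw [integral_eq_lintegral_of_nonneg_ae
      (Filter.Eventually.of_forall fun x => (Real.exp_pos _).le)
      (Measurable.aestronglyMeasurable (by fun_prop)),
      stepB, ENNReal.toReal_ofReal (by positivity)]
  rw [stepA, stepC]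
  -- final algebra
  have hrpow : C * (1 - 2 * u) ^ (-ν / 2) = (1 - 2 * t) ^ (-ν / 2) := by
    rw [hCdef, h2u, Real.div_rpow h2t.le h2s.le, mul_comm,
      div_mul_cancel₀ _ (ne_of_gt (Real.rpow_pos_of_pos h2s _))]
  have hkey : u = h * t / (1 + h - 2 * t) := by
    rw [hudef, hsdef]
    field_simp [h1h.ne', hC2]
  have hD2 : (1:ℝ) + h - 2 * t - 2 * (h * t) ≠ 0 := by nlinarith [mul_pos h2t h1h]
  have hexp : δ * u / (1 - 2 * u) = h * δ / (1 + h) * t / (1 - 2 * t) := by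
    rw [hkey]
    have e1 : 1 - 2 * (h * t / (1 + h - 2 * t)) = (1 + h) * (1 - 2 * t) / (1 + h - 2 * t) := by
      rw [eq_div_iff hC2, sub_mul, one_mul, mul_assoc, div_mul_cancel₀ _ hC2]; ring
    rw [e1, mul_div_assoc', div_div_div_cancel_right₀ hC2, div_mul_eq_mul_div, div_div]
    ring
  rw [hDdef, ← mul_assoc, hrpow, hexp]
end

section
/- Let ν > 0 and h > 0. If Y ∼ χ²_ν (central chi-square with ν degrees of freedom) and, conditionally on Y = y, X ∼ χ²_ν(yh) (noncentral chi-square with noncentrality yh), then X/(1+h) ∼ χ²_ν, i.e., X is distributed as (1+h) times a central chi-square with ν degrees of freedom. -/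
open MeasureTheory ProbabilityTheory

lemma integrable_of_mgf {μ : Measure ℝ} {ν δ t : ℝ} (hμ : IsNoncentralChiSq μ ν δ)
    (ht : t < 1 / 2) : Integrable (fun x => Real.exp (t * x)) μ := by
  by_contra hcon
  have h0 : (0:ℝ) < (1 - 2 * t) ^ (-ν / 2) * Real.exp (δ * t / (1 - 2 * t)) := by
    have : (0:ℝ) < 1 - 2 * t := by linarith
    positivity
  rw [← hμ.2 t ht, integral_undef hcon] at h0
  exact lt_irrefl _ h0
lemma ae_nonneg_of_central {μ : Measure ℝ} {ν : ℝ} (hν : 0 < ν)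
    (hμ : IsNoncentralChiSq μ ν 0) : ∀ᵐ y ∂μ, 0 ≤ y := by
  have hfin : IsProbabilityMeasure μ := hμ.1
  have key : ∀ ε : ℝ, 0 < ε → μ {x | x ≤ -ε} = 0 := by
    intro ε hε
    have hbound : ∀ t : ℝ, t < 0 → (μ {x | x ≤ -ε}).toReal ≤ Real.exp (t * ε) := by
      intro t ht
      have ht2 : t < 1 / 2 := by linarith
      have hint := integrable_of_mgf hμ ht2
      have hs : MeasurableSet {x : ℝ | x ≤ -ε} := measurableSet_Iic
      have h1 : ∫ x in {x : ℝ | x ≤ -ε}, Real.exp (-(t * ε)) ∂μ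
          ≤ ∫ x in {x : ℝ | x ≤ -ε}, Real.exp (t * x) ∂μ := by
        refine setIntegral_mono_on (integrable_const _).integrableOn hint.integrableOn hs ?_
        intro x hx
        have hx' : x ≤ -ε := hx
        exact Real.exp_le_exp.mpr (by nlinarith)
      have h2 : ∫ x in {x : ℝ | x ≤ -ε}, Real.exp (t * x) ∂μ ≤ ∫ x, Real.exp (t * x) ∂μ :=
        setIntegral_le_integral hint (Filter.Eventually.of_forall fun x => (Real.exp_pos _).le)
      have h3 : ∫ x, Real.exp (t * x) ∂μ ≤ 1 := by
        rw [hμ.2 t ht2]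
        have h1t : (1:ℝ) ≤ 1 - 2 * t := by linarith
        have := Real.rpow_le_one_of_one_le_of_nonpos h1t (by linarith : -ν / 2 ≤ 0)
        simpa using this
      have h4 : ∫ x in {x : ℝ | x ≤ -ε}, Real.exp (-(t * ε)) ∂μ
          = (μ {x | x ≤ -ε}).toReal * Real.exp (-(t * ε)) := by
        rw [setIntegral_const]; rfl
      have h5 : (μ {x | x ≤ -ε}).toReal * Real.exp (-(t * ε)) ≤ 1 := by
        rw [← h4]; exact le_trans h1 (le_trans h2 h3)
      have hexp : Real.exp (-(t * ε)) = (Real.exp (t * ε))⁻¹ := by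
        rw [Real.exp_neg]
      rw [hexp] at h5
      have hpos := Real.exp_pos (t * ε)
      calc (μ {x | x ≤ -ε}).toReal
          = (μ {x | x ≤ -ε}).toReal * (Real.exp (t*ε))⁻¹ * Real.exp (t*ε) := by
            field_simp
        _ ≤ 1 * Real.exp (t * ε) := by
            exact mul_le_mul_of_nonneg_right h5 hpos.le
        _ = Real.exp (t * ε) := one_mul _
    have htend : Filter.Tendsto (fun n : ℕ => Real.exp (-(n:ℝ) * ε)) Filter.atTop (nhds 0) := by
      apply Real.tendsto_exp_atBot.comp
      apply Filter.Tendsto.atBot_mul_const hε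
      exact Filter.tendsto_neg_atBot_iff.mpr tendsto_natCast_atTop_atTop
    have hle0 : (μ {x | x ≤ -ε}).toReal ≤ 0 := by
      refine ge_of_tendsto htend ?_
      filter_upwards [Filter.eventually_ge_atTop 1] with n hn
      refine hbound (-(n:ℝ)) ?_
      have h0n : (0:ℝ) < n := by exact_mod_cast hn
      linarith
    have : (μ {x | x ≤ -ε}).toReal = 0 :=
      le_antisymm hle0 ENNReal.toReal_nonneg
    have hne : μ {x | x ≤ -ε} ≠ ⊤ := measure_ne_top μ _
    exact (ENNReal.toReal_eq_zero_iff _).mp this |>.resolve_right hne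
  rw [Filter.eventually_iff, mem_ae_iff]
  have hsub : {x : ℝ | ¬ x ∈ {y : ℝ | 0 ≤ y}} ⊆ ⋃ n : ℕ, {x : ℝ | x ≤ -(1/(n+1))} := by
    intro x hx
    simp only [Set.mem_setOf_eq, not_le] at hx
    obtain ⟨n, hn⟩ := exists_nat_one_div_lt (by linarith : (0:ℝ) < -x)
    exact Set.mem_iUnion.mpr ⟨n, by simp only [Set.mem_setOf_eq]; push_cast at hn ⊢; linarith⟩
  refine measure_mono_null hsub ?_
  refine measure_iUnion_null fun n => key _ (by positivity)

set_option maxHeartbeats 1000000 in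
theorem central_chi_sq_mixture (ν h : ℝ) (hν : 0 < ν) (hh : 0 < h)
    (μY : Measure ℝ) (κ : Kernel ℝ ℝ)
    (hY : IsNoncentralChiSq μY ν 0)
    (hκ : ∀ y : ℝ, 0 ≤ y → IsNoncentralChiSq (κ y) ν (y * h)) :
    IsNoncentralChiSq ((μY.bind κ).map (fun x => x / (1 + h))) ν 0 := by
  have hYprob : IsProbabilityMeasure μY := hY.1
  have haeY : ∀ᵐ y ∂μY, 0 ≤ y := ae_nonneg_of_central hν hY
  have h1h : (0:ℝ) < 1 + h := by linarith
  have hg : Measurable (fun x : ℝ => x / (1 + h)) := measurable_id.div_const _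
  -- the bind is a probability measure
  have hbindprob : IsProbabilityMeasure (μY.bind κ) := by
    constructor
    rw [Measure.bind_apply MeasurableSet.univ (Kernel.measurable κ).aemeasurable]
    have : ∀ᵐ y ∂μY, (κ y) Set.univ = 1 := by
      filter_upwards [haeY] with y hy
      have := (hκ y hy).1
      exact this.measure_univ
    rw [lintegral_congr_ae this]
    simp
  have hmapprob : IsProbabilityMeasure ((μY.bind κ).map (fun x => x / (1 + h))) :=
    Measure.isProbabilityMeasure_map hg.aemeasurable
  refine ⟨hmapprob, fun t ht => ?_⟩
  set u : ℝ := t / (1 + h) with hu_def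
  have hu : u < 1 / 2 := by
    rw [hu_def, div_lt_iff₀ h1h]; nlinarith
  have h12u : (0:ℝ) < 1 - 2 * u := by linarith
  set s : ℝ := h * u / (1 - 2 * u) with hs_def
  have hs : s < 1 / 2 := by
    rw [hs_def, div_lt_iff₀ h12u]
    have : 2 * u * (1 + h) = 2 * t := by rw [hu_def]; field_simp
    nlinarith
  have h12s : (0:ℝ) < 1 - 2 * s := by linarith
  have h12t : (0:ℝ) < 1 - 2 * t := by linarith
  -- step 1: unfold the map
  have step1 : ∫ x, Real.exp (t * x) ∂((μY.bind κ).map (fun x => x / (1 + h)))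
      = ∫ x, Real.exp (u * x) ∂(μY.bind κ) := by
    have hm : Measurable fun x : ℝ => Real.exp (t * x) := (measurable_id.const_mul t).exp
    rw [integral_map hg.aemeasurable hm.aestronglyMeasurable]
    refine integral_congr_ae (Filter.Eventually.of_forall fun x => ?_)
    have hx : t * (x / (1 + h)) = u * x := by rw [hu_def]; field_simp
    simp only [hx]
  rw [step1]
  -- step 2: compute the integral over the bind via lintegrals
  have hmeasf : Measurable (fun x : ℝ => ENNReal.ofReal (Real.exp (u * x))) :=
    (show Measurable fun x : ℝ => Real.exp (u * x) from (measurable_id.const_mul u).exp).ennreal_ofReal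
  have step2 : ∫ x, Real.exp (u * x) ∂(μY.bind κ)
      = (∫⁻ x, ENNReal.ofReal (Real.exp (u * x)) ∂(μY.bind κ)).toReal := by
    rw [integral_eq_lintegral_of_nonneg_ae
      (Filter.Eventually.of_forall fun x => (Real.exp_pos _).le)
      (show Measurable fun x : ℝ => Real.exp (u * x) from (measurable_id.const_mul u).exp).aestronglyMeasurable]
  rw [step2, Measure.lintegral_bind (Kernel.measurable κ).aemeasurable hmeasf.aemeasurable]
  have hinner : ∀ᵐ y ∂μY, ∫⁻ x, ENNReal.ofReal (Real.exp (u * x)) ∂(κ y)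
      = ENNReal.ofReal ((1 - 2 * u) ^ (-ν / 2)) * ENNReal.ofReal (Real.exp (s * y)) := by
    filter_upwards [haeY] with y hy
    have hint := integrable_of_mgf (hκ y hy) hu
    rw [← ofReal_integral_eq_lintegral_ofReal hint
      (Filter.Eventually.of_forall fun x => (Real.exp_pos _).le)]
    rw [(hκ y hy).2 u hu, ENNReal.ofReal_mul (by positivity)]
    congr 2
    rw [hs_def]; ring
  rw [lintegral_congr_ae hinner]
  rw [lintegral_const_mul _ (show Measurable fun y : ℝ => ENNReal.ofReal (Real.exp (s * y)) from ((measurable_id.const_mul s).exp).ennreal_ofReal)]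
  rw [← ofReal_integral_eq_lintegral_ofReal (integrable_of_mgf hY hs)
    (Filter.Eventually.of_forall fun x => (Real.exp_pos _).le)]
  rw [hY.2 s hs]
  simp only [zero_mul, zero_div, Real.exp_zero, mul_one]
  rw [← ENNReal.ofReal_mul (by positivity), ENNReal.toReal_ofReal (by positivity)]
  -- algebra
  have h2 : u * (1 + h) = t := by rw [hu_def]; field_simp
  have hsv : 1 - 2 * s = (1 - 2 * t) / (1 - 2 * u) := by
    rw [hs_def, eq_div_iff h12u.ne']
    have h3 : h * u / (1 - 2 * u) * (1 - 2 * u) = h * u := div_mul_cancel₀ _ h12u.ne'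
    linear_combination -2 * h3 - 2 * h2
  rw [hsv, ← Real.mul_rpow h12u.le (by positivity : (0:ℝ) ≤ (1 - 2*t)/(1 - 2*u)),
    mul_div_cancel₀ _ h12u.ne']
end

section
/- Let Σ, Δ, T, A be d×d real matrices such that I - 2TA and I - 2(I+Σ)TA are invertible, and set T̃ = TA(I - 2TA)⁻¹. Then tr(T̃ (I - 2ΣT̃)⁻¹ Δ) = tr(TA (I - 2(I+Σ)TA)⁻¹ Δ). -/
open Matrix

theorem trace_collapse {d : ℕ} (Sig Δ T A : Matrix (Fin d) (Fin d) ℝ)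
    (h1 : IsUnit (1 - 2 * T * A)) (h2 : IsUnit (1 - 2 * (1 + Sig) * T * A)) :
    (T * A * (1 - 2 * T * A)⁻¹ *
        (1 - 2 * Sig * (T * A * (1 - 2 * T * A)⁻¹))⁻¹ * Δ).trace
      = (T * A * (1 - 2 * (1 + Sig) * T * A)⁻¹ * Δ).trace := by
  have hd1 : IsUnit (1 - 2 * T * A).det := (isUnit_iff_isUnit_det _).mp h1
  have hd2 : IsUnit (1 - 2 * (1 + Sig) * T * A).det := (isUnit_iff_isUnit_det _).mp h2
  have key : (1 - 2 * Sig * (T * A * (1 - 2 * T * A)⁻¹))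
      = (1 - 2 * (1 + Sig) * T * A) * (1 - 2 * T * A)⁻¹ := by
    have expand : (1 - 2 * (1 + Sig) * T * A) * (1 - 2 * T * A)⁻¹
        = (1 - 2 * T * A) * (1 - 2 * T * A)⁻¹
          - 2 * Sig * (T * A * (1 - 2 * T * A)⁻¹) := by
      noncomm_ring
    rw [expand, mul_nonsing_inv _ hd1]
  have hinv : (1 - 2 * Sig * (T * A * (1 - 2 * T * A)⁻¹))⁻¹
      = (1 - 2 * T * A) * (1 - 2 * (1 + Sig) * T * A)⁻¹ := by
    rw [key, Matrix.mul_inv_rev, nonsing_inv_nonsing_inv _ hd1]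
  rw [hinv]
  have : T * A * (1 - 2 * T * A)⁻¹ * ((1 - 2 * T * A) * (1 - 2 * (1 + Sig) * T * A)⁻¹)
      = T * A * (1 - 2 * (1 + Sig) * T * A)⁻¹ := by
    rw [Matrix.mul_assoc (T * A), ← Matrix.mul_assoc _ (1 - 2 * T * A),
      nonsing_inv_mul _ hd1, Matrix.one_mul]
  rw [Matrix.mul_assoc (T * A), ← Matrix.mul_assoc _ (1 - 2 * T * A) _] at *
  rw [nonsing_inv_mul _ hd1, Matrix.one_mul]
end
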